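/- arXiv:1704.05102 — 2 statements merged into one kernel-verified Lean document; each statement's English description precedes it below -/
import Mathlib

section
/- Let R be an integral domain and g ∈ R with g ≠ 0. Then the R-linear map T_g : R[X] → R[X] is injective, i.e., if T_g(p) = 0 then p = 0. (In the paper, with R the ring of holomorphic functions in s and g nonconstant, this is the vanishing ker P = H^{-1}(Di_Y^*(M)) = 0 for M = D_{X×S/S}/D_{X×S/S}·(x²∂_x + g(s)) and Y = {0}.) -/
open Polynomial

/-- The `R`-linear map `T_g : R[X] → R[X]`, `T_g(p) = g•p + X·p''`, describing the right
action of the relative differential operator `P = x²∂_x + g(s)` on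
`B^{(r)}_{{0}×S/S} = D_{X×S/S}/xD_{X×S/S} ≅ O_S[δ(x)]`, with `X^j` corresponding to
`δ^j(x)`. Equivalently `T_g(Σ_j a_j X^j) = Σ_j (j(j+1)·a_{j+1} + g·a_j)·X^j`. -/
noncomputable def Tg {R : Type*} [CommRing R] (g : R) : R[X] →ₗ[R] R[X] :=
  g • LinearMap.id +
    (LinearMap.mulLeft R (X : R[X])) ∘ₗ (Polynomial.derivative ∘ₗ Polynomial.derivative)

/-- If `R` is an integral domain and `g ≠ 0`, then `T_g : R[X] → R[X]` is injective. -/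
theorem Tg_injective {R : Type*} [CommRing R] [IsDomain R] (g : R) (hg : g ≠ 0) :
    Function.Injective (Tg g) := by
  rw [injective_iff_map_eq_zero]
  intro p hp
  by_contra h
  set n := p.natDegree with hn
  set q := derivative (derivative p) with hq
  have hXq : (X * q).coeff n = 0 := by
    rcases eq_or_ne q 0 with h0 | h0
    · simp [h0]
    · have hdp : derivative p ≠ 0 := by
        intro hdp; apply h0; rw [hq, hdp, map_zero]
      have hp0 : p.natDegree ≠ 0 := by
        intro hc
        exact hdp (derivative_of_natDegree_zero hc)
      have hdp0 : (derivative p).natDegree ≠ 0 := by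
        intro hc
        exact h0 (derivative_of_natDegree_zero hc)
      have h1 : (derivative p).natDegree < n := natDegree_derivative_lt hp0
      have h2 : q.natDegree < (derivative p).natDegree := natDegree_derivative_lt hdp0
      apply coeff_eq_zero_of_natDegree_lt
      calc (X * q).natDegree ≤ 1 + q.natDegree := by
              simpa using natDegree_mul_le (p := (X : R[X])) (q := q)
        _ ≤ (derivative p).natDegree := by omega
        _ < n := h1
  have hTg : Tg g p = g • p + X * q := rfl
  have hcoeff : (Tg g p).coeff n = g * p.leadingCoeff := by
    rw [hTg, coeff_add, coeff_smul, hXq, add_zero, smul_eq_mul, leadingCoeff]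
  rw [hp] at hcoeff
  simp only [coeff_zero] at hcoeff
  exact mul_ne_zero hg (leadingCoeff_ne_zero.mpr h) hcoeff.symm
end

section
/- Let R be an integral domain and let g ∈ R be nonzero and not a unit. Then for every natural number m, the monomial X^{m+1} does not belong to the R-submodule R[X]_{≤m} + T_g(R[X]) of R[X]. In particular T_g : R[X] → R[X] is not surjective, and for every m the natural map R[X]_{≤m}/T_g(R[X]_{≤m}) → R[X]_{≤m+1}/T_g(R[X]_{≤m+1}) is not surjective, so the increasing system of cokernels (Coker(T_g|_{R[X]_{≤m}}))_m is not stationary. (In the paper, with R the local ring of holomorphic germs at s₀ and g(s₀) = 0, this shows that H^0(Di_Y^*(M)) is not coherent in any neighbourhood of s₀.) -/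
open Polynomial

lemma coeff_Tg {R : Type*} [CommRing R] (g : R) (p : R[X]) (n : ℕ) :
    (Tg g p).coeff n = (n * (n + 1) : ℕ) * p.coeff (n + 1) + g * p.coeff n := by
  have h : Tg g p = g • p + X * derivative (derivative p) := rfl
  rw [h, coeff_add, coeff_smul, smul_eq_mul]
  cases n with
  | zero => simp
  | succ k =>
    rw [coeff_X_mul, coeff_derivative, coeff_derivative]
    push_cast
    ring

lemma Tg_key {R : Type*} [CommRing R] [IsDomain R] (g : R)
    (hg : g ≠ 0) (hgu : ¬IsUnit g) (m : ℕ) (q p : R[X])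
    (hq : q.degree ≤ (m : WithBot ℕ)) : q + Tg g p ≠ X ^ (m + 1) := by
  intro heq
  have hco : ∀ n, m + 1 ≤ n → (Tg g p).coeff n = ((X : R[X]) ^ (m + 1)).coeff n := by
    intro n hn
    have hqn : q.coeff n = 0 := by
      apply Polynomial.coeff_eq_zero_of_degree_lt
      refine lt_of_le_of_lt hq ?_
      exact_mod_cast Nat.lt_of_lt_of_le (Nat.lt_succ_self m) hn
    have := congrArg (fun r => Polynomial.coeff r n) heq
    simpa [hqn] using this
  have hzero : ∀ n, m + 2 ≤ n → p.coeff n = 0 := by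
    have main : ∀ k n, m + 2 ≤ n → p.natDegree + 1 ≤ n + k → p.coeff n = 0 := by
      intro k
      induction k with
      | zero =>
        intro n _ h
        exact Polynomial.coeff_eq_zero_of_natDegree_lt (by omega)
      | succ k ih =>
        intro n hn h
        by_cases h' : p.natDegree + 1 ≤ n + k
        · exact ih n hn h'
        · have h1 : p.coeff (n + 1) = 0 := ih (n + 1) (by omega) (by omega)
          have h2 := hco n (by omega)
          rw [coeff_Tg, h1, coeff_X_pow, if_neg (by omega)] at h2
          have h3 : g * p.coeff n = 0 := by simpa using h2
          exact (mul_eq_zero.mp h3).resolve_left hg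
    intro n hn
    exact main (p.natDegree + 1) n hn (by omega)
  have h2 := hco (m + 1) le_rfl
  rw [coeff_Tg, hzero (m + 2) le_rfl, coeff_X_pow, if_pos rfl] at h2
  have h3 : g * p.coeff (m + 1) = 1 := by simpa using h2
  exact hgu (IsUnit.of_mul_eq_one _ h3)

/-- If `R` is an integral domain and `g` is nonzero and not a unit, then for every `m`
the monomial `X^(m+1)` does not lie in the submodule `R[X]_{≤m} + T_g(R[X])`.  In
particular `T_g` is not surjective, and for every `m` the natural map
`R[X]_{≤m}/T_g(R[X]_{≤m}) → R[X]_{≤m+1}/T_g(R[X]_{≤m+1})` is not surjective (indeed the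
class of `X^(m+1)` is not in its image), so the increasing system of cokernels of the
restrictions `T_g|_{R[X]_{≤m}}` is not stationary. -/
theorem X_pow_not_mem_of_not_isUnit {R : Type*} [CommRing R] [IsDomain R] (g : R)
    (hg : g ≠ 0) (hgu : ¬IsUnit g) :
    (∀ m : ℕ, (X : R[X]) ^ (m + 1) ∉
      Polynomial.degreeLE R (m : WithBot ℕ) ⊔ LinearMap.range (Tg g)) ∧
    ¬Function.Surjective (Tg g) ∧
    (∀ m : ℕ, (X : R[X]) ^ (m + 1) ∉
      Polynomial.degreeLE R (m : WithBot ℕ) ⊔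
        Submodule.map (Tg g) (Polynomial.degreeLE R ((m + 1 : ℕ) : WithBot ℕ))) := by
  refine ⟨?_, ?_, ?_⟩
  · intro m hmem
    rw [Submodule.mem_sup] at hmem
    obtain ⟨q, hq, t, ht, h⟩ := hmem
    obtain ⟨p, rfl⟩ := ht
    exact Tg_key g hg hgu m q p (Polynomial.mem_degreeLE.mp hq) h
  · intro hsurj
    obtain ⟨p, hp⟩ := hsurj ((X : R[X]) ^ 1)
    exact Tg_key g hg hgu 0 0 p (by simp) (by simpa using hp)
  · intro m hmem
    rw [Submodule.mem_sup] at hmem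
    obtain ⟨q, hq, t, ht, h⟩ := hmem
    obtain ⟨p, _, rfl⟩ := ht
    exact Tg_key g hg hgu m q p (Polynomial.mem_degreeLE.mp hq) h
end
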